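/- With (X_i,Y_i) i.i.d. with continuous joint distribution F, marginals H and G, and Y_{[n,n]} the concomitant of the maximum of X_1,...,X_n: for fixed y, P(Y_{[n,n]} > y, Y_{[n+1,n+1]} ≤ y) = n ∫_ℝ H(x)^{n-1} (G(y) − F(x,y)) [dH(x) − F(dx, y)]. -/

import Mathlib

open MeasureTheory Filter

open Topology
open scoped ENNReal

/-- Marginal distribution function of the first coordinate. -/
noncomputable def margH (ν : Measure (ℝ × ℝ)) (x : ℝ) : ℝ :=
  (ν (Set.Iic x ×ˢ Set.univ)).toReal

/-- Marginal distribution function of the second coordinate. -/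
noncomputable def margG (ν : Measure (ℝ × ℝ)) (y : ℝ) : ℝ :=
  (ν (Set.univ ×ˢ Set.Iic y)).toReal

/-- Bivariate distribution function. -/
noncomputable def bivF (ν : Measure (ℝ × ℝ)) (x y : ℝ) : ℝ :=
  (ν (Set.Iic x ×ˢ Set.Iic y)).toReal

/-- The measure `dH(x) − F(dx, y)`: the first-coordinate marginal of `ν` restricted to
`{(x', y') : y' > y}`. -/
noncomputable def margMeasAbove (ν : Measure (ℝ × ℝ)) (y : ℝ) : Measure ℝ :=
  (ν.restrict (Set.univ ×ˢ Set.Ioi y)).map Prod.fst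

lemma marg_atom_zero (ν : Measure (ℝ × ℝ)) [IsProbabilityMeasure ν]
    (hcont : Continuous fun p : ℝ × ℝ => bivF ν p.1 p.2) (x : ℝ) :
    ν ({x} ×ˢ (Set.univ : Set ℝ)) = 0 := by
  have key : ∀ y : ℝ, ν (({x} : Set ℝ) ×ˢ Set.Iic y) = 0 := by
    intro y
    set s : ℕ → Set (ℝ × ℝ) := fun k => Set.Iic (x - 1/(k+1)) ×ˢ Set.Iic y with hs
    have hmono : Monotone s := by
      intro a b hab
      apply Set.prod_mono_left
      apply Set.Iic_subset_Iic.2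
      have h1 : (1:ℝ)/(b+1) ≤ 1/(a+1) := by
        apply one_div_le_one_div_of_le
        · positivity
        · exact_mod_cast by omega
      linarith
    have hUnion : ⋃ k, s k = Set.Iio x ×ˢ Set.Iic y := by
      ext p
      simp only [Set.mem_iUnion, hs, Set.mem_prod, Set.mem_Iic, Set.mem_Iio]
      constructor
      · rintro ⟨k, h1, h2⟩
        have : (0:ℝ) < 1/((k:ℝ)+1) := by positivity
        exact ⟨by linarith, h2⟩
      · rintro ⟨h1, h2⟩
        obtain ⟨k, hk⟩ := exists_nat_one_div_lt (sub_pos.2 h1)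
        exact ⟨k, by linarith, h2⟩
    have h1 : Tendsto (fun k => ν (s k)) atTop (𝓝 (ν (Set.Iio x ×ˢ Set.Iic y))) := by
      rw [← hUnion]; exact tendsto_measure_iUnion_atTop hmono
    have h1' : Tendsto (fun k => (ν (s k)).toReal) atTop
        (𝓝 ((ν (Set.Iio x ×ˢ Set.Iic y)).toReal)) :=
      (ENNReal.tendsto_toReal (measure_ne_top _ _)).comp h1
    have h2 : Tendsto (fun k : ℕ => (ν (s k)).toReal) atTop (𝓝 (bivF ν x y)) := by
      have hx : Tendsto (fun k : ℕ => x - 1/((k:ℝ)+1)) atTop (𝓝 x) := by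
        simpa using tendsto_const_nhds.sub (tendsto_one_div_add_atTop_nhds_zero_nat (𝕜 := ℝ))
      have := (hcont.tendsto (x, y)).comp
        (hx.prodMk_nhds (tendsto_const_nhds : Tendsto (fun _ : ℕ => y) atTop (𝓝 y)))
      simpa [Function.comp_def, hs, bivF] using this
    have heq : (ν (Set.Iio x ×ˢ Set.Iic y)).toReal = (ν (Set.Iic x ×ˢ Set.Iic y)).toReal :=
      tendsto_nhds_unique h1' h2
    have hEq : ν (Set.Iio x ×ˢ Set.Iic y) = ν (Set.Iic x ×ˢ Set.Iic y) :=
      (ENNReal.toReal_eq_toReal_iff' (measure_ne_top _ _) (measure_ne_top _ _)).1 heq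
    have hsub : Set.Iio x ×ˢ Set.Iic y ⊆ Set.Iic x ×ˢ Set.Iic y :=
      Set.prod_mono_left Set.Iio_subset_Iic_self
    have hdiff : ({x} : Set ℝ) ×ˢ Set.Iic y
        = (Set.Iic x ×ˢ Set.Iic y) \ (Set.Iio x ×ˢ Set.Iic y) := by
      ext p
      simp only [Set.mem_prod, Set.mem_singleton_iff, Set.mem_diff, Set.mem_Iic, Set.mem_Iio]
      constructor
      · rintro ⟨h1, h2⟩
        exact ⟨⟨h1.le, h2⟩, fun h => absurd h.1 (by rw [h1]; exact lt_irrefl x)⟩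
      · rintro ⟨⟨h1, h2⟩, h3⟩
        exact ⟨le_antisymm h1 (not_lt.1 fun hlt => h3 ⟨hlt, h2⟩), h2⟩
    rw [hdiff, measure_diff hsub ((measurableSet_Iio.prod measurableSet_Iic).nullMeasurableSet)
      (measure_ne_top _ _), ← hEq, tsub_self]
  have hsub : ({x} : Set ℝ) ×ˢ (Set.univ : Set ℝ) ⊆ ⋃ k : ℕ, ({x} : Set ℝ) ×ˢ Set.Iic (k : ℝ) := by
    rintro ⟨a, b⟩ ⟨ha, -⟩
    obtain ⟨k, hk⟩ := exists_nat_ge b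
    exact Set.mem_iUnion.2 ⟨k, ha, hk⟩
  exact measure_mono_null hsub (measure_iUnion_null fun k => key k)

section
variable {Ω : Type*} [MeasurableSpace Ω] (μ : Measure Ω) [IsProbabilityMeasure μ]
    (ν : Measure (ℝ × ℝ)) [IsProbabilityMeasure ν]
    (Z : ℕ → Ω → ℝ × ℝ) (hZmeas : ∀ i, Measurable (Z i))
    (hindep : ProbabilityTheory.iIndepFun Z μ)
    (hlaw : ∀ i, Measure.map (Z i) μ = ν)

include hZmeas hindep hlaw in
lemma ties_null (hcont : Continuous fun p : ℝ × ℝ => bivF ν p.1 p.2)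
    {i j : ℕ} (hij : i ≠ j) : μ {ω | (Z i ω).1 = (Z j ω).1} = 0 := by
  have hIF : ProbabilityTheory.IndepFun (Z i) (Z j) μ := hindep.indepFun hij
  have hmap : μ.map (fun ω => (Z i ω, Z j ω)) = ν.prod ν := by
    have := (ProbabilityTheory.indepFun_iff_map_prod_eq_prod_map_map
      (hZmeas i).aemeasurable (hZmeas j).aemeasurable).1 hIF
    rw [this, hlaw i, hlaw j]
  have hD : MeasurableSet {q : (ℝ × ℝ) × (ℝ × ℝ) | q.1.1 = q.2.1} :=
    measurableSet_eq_fun (measurable_fst.fst) (measurable_snd.fst)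
  have hset : {ω | (Z i ω).1 = (Z j ω).1}
      = (fun ω => (Z i ω, Z j ω)) ⁻¹' {q | q.1.1 = q.2.1} := rfl
  rw [hset, ← Measure.map_apply ((hZmeas i).prodMk (hZmeas j)) hD, hmap,
    Measure.prod_apply hD]
  have hz : ∀ p : ℝ × ℝ, ν {q : ℝ × ℝ | p.1 = q.1} = 0 := by
    intro p
    have hq : {q : ℝ × ℝ | p.1 = q.1} = ({p.1} : Set ℝ) ×ˢ (Set.univ : Set ℝ) := by
      ext ⟨a, b⟩; simp [eq_comm]
    rw [hq]
    exact marg_atom_zero ν hcont p.1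
  calc ∫⁻ p, ν (Prod.mk p ⁻¹' {q : (ℝ × ℝ) × (ℝ × ℝ) | q.1.1 = q.2.1}) ∂ν
      = ∫⁻ _, 0 ∂ν := lintegral_congr hz
    _ = 0 := lintegral_zero

include hZmeas hindep hlaw in
lemma law_pi (m : ℕ) :
    μ.map (fun ω (i : Fin m) => Z (i : ℕ) ω) = Measure.pi (fun _ : Fin m => ν) := by
  classical
  have Wmeas : Measurable (fun ω (i : Fin m) => Z (i : ℕ) ω) :=
    measurable_pi_lambda _ fun i => hZmeas i
  refine (Measure.pi_eq fun s hs => ?_).symm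
  rw [Measure.map_apply Wmeas (MeasurableSet.univ_pi hs)]
  set t : ℕ → Set (ℝ × ℝ) := fun i => if h : i < m then s ⟨i, h⟩ else Set.univ with ht
  have htm : ∀ i, MeasurableSet (t i) := by
    intro i; rw [ht]; dsimp only; split
    · exact hs _
    · exact MeasurableSet.univ
  have hpre : (fun ω (i : Fin m) => Z (i : ℕ) ω) ⁻¹' Set.pi Set.univ s
      = ⋂ i ∈ Finset.range m, Z i ⁻¹' t i := by
    ext ω
    simp only [Set.mem_preimage, Set.mem_pi, Set.mem_univ, forall_true_left, Set.mem_iInter,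
      Finset.mem_range]
    constructor
    · intro h i hi
      have := h ⟨i, hi⟩
      simp only [ht, dif_pos hi]
      exact this
    · intro h i
      have := h i i.isLt
      simpa only [ht, dif_pos i.isLt] using this
  rw [hpre, hindep.measure_inter_preimage_eq_mul (Finset.range m) (fun i _ => htm i)]
  calc ∏ i ∈ Finset.range m, μ (Z i ⁻¹' t i)
      = ∏ i ∈ Finset.range m, ν (t i) := by
        refine Finset.prod_congr rfl fun i _ => ?_
        rw [← hlaw i, Measure.map_apply (hZmeas i) (htm i)]
    _ = ∏ i : Fin m, ν (t i) := (Fin.prod_univ_eq_prod_range _ m).symm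
    _ = ∏ i : Fin m, ν (s i) := by
        refine Finset.prod_congr rfl fun i _ => ?_
        simp [ht, i.isLt]
end

lemma pi_S (ν : Measure (ℝ × ℝ)) [IsProbabilityMeasure ν] (n : ℕ) (y : ℝ)
    (j : Fin (n + 1)) (hj : j ≠ Fin.last n) :
    (Measure.pi fun _ : Fin (n + 1) => ν)
      {z : Fin (n + 1) → ℝ × ℝ |
        (∀ i, i ≠ j → i ≠ Fin.last n → (z i).1 < (z j).1) ∧ y < (z j).2 ∧
          (z j).1 < (z (Fin.last n)).1 ∧ (z (Fin.last n)).2 ≤ y}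
      = ∫⁻ p in Set.univ ×ˢ Set.Ioi y,
          (ν (Set.Iio p.1 ×ˢ Set.univ)) ^ (n - 1) * ν (Set.Ioi p.1 ×ˢ Set.Iic y) ∂ν := by
  classical
  obtain ⟨k0, hk0⟩ := Fin.exists_succAbove_eq (Ne.symm hj)
  set e := MeasurableEquiv.piFinSuccAbove (fun _ : Fin (n + 1) => ℝ × ℝ) j with he
  set B : ℝ → Fin n → Set (ℝ × ℝ) := fun x k =>
    if k = k0 then Set.Ioi x ×ˢ Set.Iic y else Set.Iio x ×ˢ Set.univ with hB
  set T : Set ((ℝ × ℝ) × (Fin n → ℝ × ℝ)) :=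
    {q | y < q.1.2 ∧ ∀ k, q.2 k ∈ B q.1.1 k} with hT
  have happ : ∀ z : Fin (n + 1) → ℝ × ℝ, e z = (z j, fun k => z (j.succAbove k)) := by
    intro z
    rfl
  have hS : {z : Fin (n + 1) → ℝ × ℝ |
        (∀ i, i ≠ j → i ≠ Fin.last n → (z i).1 < (z j).1) ∧ y < (z j).2 ∧
          (z j).1 < (z (Fin.last n)).1 ∧ (z (Fin.last n)).2 ≤ y} = e ⁻¹' T := by
    ext z
    simp only [Set.mem_setOf_eq, Set.mem_preimage, happ, hT]
    constructor
    · rintro ⟨hmid, hy, hlt, hle⟩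
      refine ⟨hy, fun k => ?_⟩
      by_cases hk : k = k0
      · subst hk
        rw [hB]
        simp only [if_pos rfl, hk0, Set.mem_prod, Set.mem_Ioi, Set.mem_Iic]
        exact ⟨hlt, hle⟩
      · rw [hB]
        simp only [if_neg hk, Set.mem_prod, Set.mem_Iio, Set.mem_univ, and_true]
        refine hmid _ (Fin.succAbove_ne j k) ?_
        intro hc
        exact hk (Fin.succAbove_right_injective (hc.trans hk0.symm))
    · rintro ⟨hy, hall⟩
      have hlast := hall k0
      rw [hB] at hlast
      simp only [if_pos rfl, hk0, Set.mem_prod, Set.mem_Ioi, Set.mem_Iic] at hlast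
      refine ⟨fun i hij hilast => ?_, hy, hlast.1, hlast.2⟩
      obtain ⟨k, hk⟩ := Fin.exists_succAbove_eq hij
      have hkk0 : k ≠ k0 := by
        intro hc; subst hc; exact hilast (hk ▸ hk0 ▸ rfl)
      have := hall k
      rw [hB] at this
      simp only [if_neg hkk0, Set.mem_prod, Set.mem_Iio, Set.mem_univ, and_true] at this
      rw [← hk]
      exact this
  have hTmeas : MeasurableSet T := by
    have h1 : MeasurableSet {q : (ℝ × ℝ) × (Fin n → ℝ × ℝ) | y < q.1.2} :=
      measurableSet_lt measurable_const measurable_fst.snd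
    have h2 : ∀ k, MeasurableSet {q : (ℝ × ℝ) × (Fin n → ℝ × ℝ) | q.2 k ∈ B q.1.1 k} := by
      intro k
      have hev : Measurable fun q : (ℝ × ℝ) × (Fin n → ℝ × ℝ) => q.2 k :=
        (measurable_pi_apply k).comp measurable_snd
      by_cases hk : k = k0
      · subst hk
        have hq : {q : (ℝ × ℝ) × (Fin n → ℝ × ℝ) | q.2 k ∈ B q.1.1 k}
            = {q : (ℝ × ℝ) × (Fin n → ℝ × ℝ) | q.1.1 < (q.2 k).1}
              ∩ {q : (ℝ × ℝ) × (Fin n → ℝ × ℝ) | (q.2 k).2 ≤ y} := by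
          ext q; rw [hB]; simp [Set.mem_prod]
        rw [hq]
        exact (measurableSet_lt measurable_fst.fst hev.fst).inter
          (measurableSet_le hev.snd measurable_const)
      · have hq : {q : (ℝ × ℝ) × (Fin n → ℝ × ℝ) | q.2 k ∈ B q.1.1 k}
            = {q : (ℝ × ℝ) × (Fin n → ℝ × ℝ) | (q.2 k).1 < q.1.1} := by
          ext q; rw [hB]; simp [hk, Set.mem_prod]
        rw [hq]
        exact measurableSet_lt hev.fst measurable_fst.fst
    have hTeq : T = {q : (ℝ × ℝ) × (Fin n → ℝ × ℝ) | y < q.1.2}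
        ∩ ⋂ k, {q : (ℝ × ℝ) × (Fin n → ℝ × ℝ) | q.2 k ∈ B q.1.1 k} := by
      ext q; simp [hT]
    rw [hTeq]
    exact h1.inter (MeasurableSet.iInter h2)
  have hpres : MeasurePreserving e (Measure.pi fun _ : Fin (n + 1) => ν)
      (ν.prod (Measure.pi fun _ : Fin n => ν)) :=
    measurePreserving_piFinSuccAbove (fun _ : Fin (n + 1) => ν) j
  rw [hS, hpres.measure_preimage hTmeas.nullMeasurableSet, Measure.prod_apply hTmeas]
  have hslice : ∀ p : ℝ × ℝ,
      (Measure.pi fun _ : Fin n => ν) (Prod.mk p ⁻¹' T)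
        = Set.indicator (Set.univ ×ˢ Set.Ioi y)
            (fun p : ℝ × ℝ => (ν (Set.Iio p.1 ×ˢ Set.univ)) ^ (n - 1)
              * ν (Set.Ioi p.1 ×ˢ Set.Iic y)) p := by
    intro p
    by_cases hp : y < p.2
    · have hpre : Prod.mk p ⁻¹' T = Set.pi Set.univ (B p.1) := by
        ext w; simp [hT, hp, Set.mem_pi]
      have hpmem : p ∈ Set.univ ×ˢ Set.Ioi y := ⟨Set.mem_univ _, hp⟩
      rw [hpre, Measure.pi_pi, Set.indicator_of_mem hpmem]
      have hprod : ∏ k : Fin n, ν (B p.1 k)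
          = ν (Set.Ioi p.1 ×ˢ Set.Iic y) * (ν (Set.Iio p.1 ×ˢ Set.univ)) ^ (n - 1) := by
        rw [← Finset.mul_prod_erase Finset.univ _ (Finset.mem_univ k0)]
        congr 1
        · rw [hB]; simp
        · rw [Finset.prod_congr rfl (fun k hk => ?_), Finset.prod_const,
            Finset.card_erase_of_mem (Finset.mem_univ k0), Finset.card_univ, Fintype.card_fin]
          rw [hB]; simp only [if_neg (Finset.ne_of_mem_erase hk)]
      rw [hprod, mul_comm]
    · have hpre : Prod.mk p ⁻¹' T = ∅ := by
        ext w; simp [hT, hp]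
      have hpmem : p ∉ Set.univ ×ˢ Set.Ioi y := fun h => hp h.2
      rw [hpre, measure_empty, Set.indicator_of_notMem hpmem]
  rw [lintegral_congr hslice,
    lintegral_indicator (MeasurableSet.univ.prod measurableSet_Ioi)]

theorem stmt10 {Ω : Type*} [MeasurableSpace Ω] (μ : Measure Ω) [IsProbabilityMeasure μ]
    (ν : Measure (ℝ × ℝ)) [IsProbabilityMeasure ν]
    (Z : ℕ → Ω → ℝ × ℝ) (hZmeas : ∀ i, Measurable (Z i))
    (hindep : ProbabilityTheory.iIndepFun Z μ)
    (hlaw : ∀ i, Measure.map (Z i) μ = ν)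
    (hcont : Continuous fun p : ℝ × ℝ => bivF ν p.1 p.2)
    (C : ℕ → Ω → ℝ)
    (hC : ∀ n, 1 ≤ n → ∀ ω, ∃ j < n, C n ω = (Z j ω).2 ∧ ∀ i < n, (Z i ω).1 ≤ (Z j ω).1)
    (n : ℕ) (hn : 1 ≤ n) (y : ℝ) :
    (μ {ω | y < C n ω ∧ C (n + 1) ω ≤ y}).toReal
      = n * ∫ x, margH ν x ^ (n - 1) * (margG ν y - bivF ν x y)
          ∂(margMeasAbove ν y) := by
  classical
  set L : ℝ≥0∞ := ∫⁻ p in Set.univ ×ˢ Set.Ioi y,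
      (ν (Set.Iio p.1 ×ˢ Set.univ)) ^ (n - 1) * ν (Set.Ioi p.1 ×ˢ Set.Iic y) ∂ν with hL
  set A : ℕ → Set Ω := fun j => {ω | (∀ i, i < n → i ≠ j → (Z i ω).1 < (Z j ω).1) ∧
      y < (Z j ω).2 ∧ (Z j ω).1 < (Z n ω).1 ∧ (Z n ω).2 ≤ y} with hA
  have Wmeas : Measurable (fun ω (i : Fin (n + 1)) => Z (i : ℕ) ω) :=
    measurable_pi_lambda _ fun i => hZmeas i
  -- each A j has measure L
  have hAj : ∀ j, j < n → MeasurableSet (A j) ∧ μ (A j) = L := by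
    intro j hj
    have hjlt : j < n + 1 := by omega
    set jF : Fin (n + 1) := ⟨j, hjlt⟩ with hjF
    have hjFne : jF ≠ Fin.last n := by
      intro hc
      have := congrArg Fin.val hc
      simp only [hjF, Fin.val_last] at this
      omega
    set S : Set (Fin (n + 1) → ℝ × ℝ) := {z |
        (∀ i, i ≠ jF → i ≠ Fin.last n → (z i).1 < (z jF).1) ∧ y < (z jF).2 ∧
          (z jF).1 < (z (Fin.last n)).1 ∧ (z (Fin.last n)).2 ≤ y} with hSdef
    have hpre : A j = (fun ω (i : Fin (n + 1)) => Z (i : ℕ) ω) ⁻¹' S := by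
      ext ω
      simp only [hA, hSdef, Set.mem_setOf_eq, Set.mem_preimage]
      constructor
      · rintro ⟨h1, h2, h3, h4⟩
        refine ⟨fun i hij hil => ?_, h2, h3, h4⟩
        have hiv : (i : ℕ) ≠ n := fun hc => hil (Fin.ext (by simpa using hc))
        have hivlt : (i : ℕ) < n := by have := i.isLt; omega
        exact h1 i hivlt (fun hc => hij (Fin.ext (by simpa using hc)))
      · rintro ⟨h1, h2, h3, h4⟩
        refine ⟨fun i hin hij => ?_, h2, h3, h4⟩
        have := h1 ⟨i, by omega⟩
          (fun hc => hij (by simpa using congrArg Fin.val hc))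
          (fun hc => by have := congrArg Fin.val hc; simp at this; omega)
        exact this
    have hSmeas : MeasurableSet S := by
      have h1 : MeasurableSet {z : Fin (n + 1) → ℝ × ℝ |
          ∀ i, i ≠ jF → i ≠ Fin.last n → (z i).1 < (z jF).1} := by
        have : {z : Fin (n + 1) → ℝ × ℝ | ∀ i, i ≠ jF → i ≠ Fin.last n → (z i).1 < (z jF).1}
            = ⋂ i, ⋂ (_ : i ≠ jF), ⋂ (_ : i ≠ Fin.last n),
              {z : Fin (n + 1) → ℝ × ℝ | (z i).1 < (z jF).1} := by
          ext z; simp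
        rw [this]
        exact MeasurableSet.iInter fun i => MeasurableSet.iInter fun _ =>
          MeasurableSet.iInter fun _ =>
            measurableSet_lt ((measurable_pi_apply i).fst) ((measurable_pi_apply jF).fst)
      have h2 : MeasurableSet {z : Fin (n + 1) → ℝ × ℝ | y < (z jF).2} :=
        measurableSet_lt measurable_const ((measurable_pi_apply jF).snd)
      have h3 : MeasurableSet {z : Fin (n + 1) → ℝ × ℝ | (z jF).1 < (z (Fin.last n)).1} :=
        measurableSet_lt ((measurable_pi_apply jF).fst) ((measurable_pi_apply (Fin.last n)).fst)
      have h4 : MeasurableSet {z : Fin (n + 1) → ℝ × ℝ | (z (Fin.last n)).2 ≤ y} :=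
        measurableSet_le ((measurable_pi_apply (Fin.last n)).snd) measurable_const
      have hSeq : S = {z : Fin (n + 1) → ℝ × ℝ |
            ∀ i, i ≠ jF → i ≠ Fin.last n → (z i).1 < (z jF).1}
          ∩ ({z : Fin (n + 1) → ℝ × ℝ | y < (z jF).2}
            ∩ ({z : Fin (n + 1) → ℝ × ℝ | (z jF).1 < (z (Fin.last n)).1}
              ∩ {z : Fin (n + 1) → ℝ × ℝ | (z (Fin.last n)).2 ≤ y})) := by
        ext z
        simp only [hSdef, Set.mem_setOf_eq, Set.mem_inter_iff]
      rw [hSeq]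
      exact h1.inter (h2.inter (h3.inter h4))
    refine ⟨hpre ▸ Wmeas hSmeas, ?_⟩
    rw [hpre, ← Measure.map_apply Wmeas hSmeas,
      law_pi μ ν Z hZmeas hindep hlaw (n + 1), hSdef]
    exact pi_S ν n y jF hjFne
  -- null set of ties
  set N : Set Ω := ⋃ (i : Fin (n + 1)) (k : Fin (n + 1)) (_ : i ≠ k),
      {ω | (Z (i : ℕ) ω).1 = (Z (k : ℕ) ω).1} with hN
  have hNnull : μ N = 0 := by
    refine measure_iUnion_null fun i => measure_iUnion_null fun k => measure_iUnion_null fun hik => ?_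
    exact ties_null μ ν Z hZmeas hindep hlaw hcont (fun hc => hik (Fin.val_injective hc))
  -- A j ⊆ E
  set E : Set Ω := {ω | y < C n ω ∧ C (n + 1) ω ≤ y} with hE
  have hUE : ∀ j, j < n → A j ⊆ E := by
    intro j hj ω hωA
    obtain ⟨h1, h2, h3, h4⟩ := hωA
    obtain ⟨j', hj', hCn, hmax⟩ := hC n hn ω
    have hj'j : j' = j := by
      by_contra hne
      have ha := h1 j' hj' hne
      have hb := hmax j hj
      linarith
    subst hj'j
    obtain ⟨j'', hj'', hCn1, hmax1⟩ := hC (n + 1) (by omega) ω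
    have hj''n : j'' = n := by
      by_contra hne
      have hj''lt : j'' < n := by omega
      have ha : (Z j'' ω).1 ≤ (Z j' ω).1 := by
        by_cases hc : j'' = j'
        · rw [hc]
        · exact (h1 j'' hj''lt hc).le
      have hb := hmax1 n (by omega)
      linarith
    subst hj''n
    exact ⟨by rw [hCn]; exact h2, by rw [hCn1]; exact h4⟩
  -- E ⊆ U ∪ N
  have hEU : E ⊆ (⋃ j ∈ Finset.range n, A j) ∪ N := by
    intro ω hωE
    by_cases hωN : ω ∈ N
    · exact Or.inr hωN
    refine Or.inl ?_
    have noties : ∀ a b : ℕ, a < n + 1 → b < n + 1 → a ≠ b → (Z a ω).1 ≠ (Z b ω).1 := by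
      intro a b ha hb hab hc
      apply hωN
      rw [hN]
      simp only [Set.mem_iUnion]
      exact ⟨⟨a, ha⟩, ⟨b, hb⟩, fun h => hab (by simpa using congrArg Fin.val h), hc⟩
    obtain ⟨j, hj, hCn, hmax⟩ := hC n hn ω
    obtain ⟨j2, hj2, hCn1, hmax1⟩ := hC (n + 1) (by omega) ω
    have hj2n : j2 = n := by
      by_contra hne
      have hj2lt : j2 < n := by omega
      have heq : (Z j2 ω).1 = (Z j ω).1 :=
        le_antisymm (hmax j2 hj2lt) (hmax1 j (by omega))
      have hj2j : j2 = j := by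
        by_contra hne2
        exact noties j2 j (by omega) (by omega) hne2 heq
      rw [hj2j] at hCn1
      have hgt : y < C n ω := hωE.1
      have hle : C (n + 1) ω ≤ y := hωE.2
      rw [hCn] at hgt
      rw [hCn1] at hle
      linarith
    rw [hj2n] at hCn1 hmax1
    refine Set.mem_biUnion (Finset.mem_range.2 hj) ?_
    refine ⟨fun i hi hij => lt_of_le_of_ne (hmax i hi) (noties i j (by omega) (by omega) hij), ?_, ?_, ?_⟩
    · rw [← hCn]; exact hωE.1
    · exact lt_of_le_of_ne (hmax1 j (by omega)) (noties j n (by omega) (by omega) (by omega))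
    · rw [← hCn1]; exact hωE.2
  -- disjointness
  have hdisj : (↑(Finset.range n) : Set ℕ).PairwiseDisjoint A := by
    intro a ha b hb hab
    refine Set.disjoint_left.2 fun ω hωa hωb => ?_
    have h1 := hωa.1 b (Finset.mem_range.1 hb) (Ne.symm hab)
    have h2 := hωb.1 a (Finset.mem_range.1 ha) hab
    exact lt_asymm h1 h2
  -- measure of E
  have hmain : μ E = (n : ℝ≥0∞) * L := by
    have hμE : μ E = μ (⋃ j ∈ Finset.range n, A j) := by
      refine le_antisymm ?_ (measure_mono (Set.iUnion₂_subset fun j hj =>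
        hUE j (Finset.mem_range.1 hj)))
      calc μ E ≤ μ ((⋃ j ∈ Finset.range n, A j) ∪ N) := measure_mono hEU
        _ ≤ μ (⋃ j ∈ Finset.range n, A j) + μ N := measure_union_le _ _
        _ = μ (⋃ j ∈ Finset.range n, A j) := by rw [hNnull, add_zero]
    rw [hμE, measure_biUnion_finset hdisj (fun j hj => (hAj j (Finset.mem_range.1 hj)).1)]
    rw [Finset.sum_congr rfl (fun j hj => (hAj j (Finset.mem_range.1 hj)).2),
      Finset.sum_const, Finset.card_range, nsmul_eq_mul]
  -- RHS conversion
  have hsplit : ∀ x : ℝ, ν (Set.univ ×ˢ Set.Iic y)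
      = ν (Set.Iic x ×ˢ Set.Iic y) + ν (Set.Ioi x ×ˢ Set.Iic y) := by
    intro x
    rw [← measure_union (Set.disjoint_left.2 fun p hp hq => absurd hq.1 (not_lt.2 hp.1))
      (measurableSet_Ioi.prod measurableSet_Iic)]
    congr 1
    rw [← Set.union_prod, Set.Iic_union_Ioi]
  have hdiffR : ∀ x, margG ν y - bivF ν x y = (ν (Set.Ioi x ×ˢ Set.Iic y)).toReal := by
    intro x
    rw [margG, bivF, hsplit x, ENNReal.toReal_add (measure_ne_top _ _) (measure_ne_top _ _)]
    ring
  have hH0 : ∀ x, 0 ≤ margH ν x := fun x => ENNReal.toReal_nonneg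
  have hnn : ∀ x, 0 ≤ margH ν x ^ (n - 1) * (margG ν y - bivF ν x y) := fun x =>
    mul_nonneg (pow_nonneg (hH0 x) _) (by rw [hdiffR]; exact ENNReal.toReal_nonneg)
  have hHmono : Monotone (margH ν) := fun a b hab =>
    ENNReal.toReal_mono (measure_ne_top _ _)
      (measure_mono (Set.prod_mono_left (Set.Iic_subset_Iic.2 hab)))
  have hFmono : Monotone (fun x => bivF ν x y) := fun a b hab =>
    ENNReal.toReal_mono (measure_ne_top _ _)
      (measure_mono (Set.prod_mono_left (Set.Iic_subset_Iic.2 hab)))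
  have hmeasInt : Measurable fun x => margH ν x ^ (n - 1) * (margG ν y - bivF ν x y) :=
    ((hHmono.measurable).pow_const _).mul (measurable_const.sub hFmono.measurable)
  rw [integral_eq_lintegral_of_nonneg_ae (Filter.Eventually.of_forall hnn)
    hmeasInt.aestronglyMeasurable]
  have hof : ∀ x, ENNReal.ofReal (margH ν x ^ (n - 1) * (margG ν y - bivF ν x y))
      = (ν (Set.Iic x ×ˢ Set.univ)) ^ (n - 1) * ν (Set.Ioi x ×ˢ Set.Iic y) := by
    intro x
    rw [ENNReal.ofReal_mul (pow_nonneg (hH0 x) _),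
      ENNReal.ofReal_pow (hH0 x), hdiffR,
      ENNReal.ofReal_toReal (measure_ne_top _ _), margH,
      ENNReal.ofReal_toReal (measure_ne_top _ _)]
  have hIicIio : ∀ x : ℝ, ν (Set.Iio x ×ˢ Set.univ) = ν (Set.Iic x ×ˢ Set.univ) := by
    intro x
    have hu : Set.Iic x ×ˢ (Set.univ : Set ℝ)
        = Set.Iio x ×ˢ (Set.univ : Set ℝ) ∪ ({x} : Set ℝ) ×ˢ Set.univ := by
      rw [← Set.union_prod, Set.Iio_union_right]
    refine le_antisymm (measure_mono (Set.prod_mono_left Set.Iio_subset_Iic_self)) ?_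
    rw [hu]
    calc ν (Set.Iio x ×ˢ (Set.univ : Set ℝ) ∪ ({x} : Set ℝ) ×ˢ Set.univ)
        ≤ ν (Set.Iio x ×ˢ (Set.univ : Set ℝ)) + ν (({x} : Set ℝ) ×ˢ Set.univ) :=
          measure_union_le _ _
      _ = ν (Set.Iio x ×ˢ (Set.univ : Set ℝ)) := by rw [marg_atom_zero ν hcont x, add_zero]
  have hfmeas : Measurable fun x : ℝ =>
      (ν (Set.Iic x ×ˢ Set.univ)) ^ (n - 1) * ν (Set.Ioi x ×ˢ Set.Iic y) := by
    have hm1 : Monotone fun x : ℝ => ν (Set.Iic x ×ˢ (Set.univ : Set ℝ)) := fun a b hab =>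
      measure_mono (Set.prod_mono_left (Set.Iic_subset_Iic.2 hab))
    have hm2 : Antitone fun x : ℝ => ν (Set.Ioi x ×ˢ Set.Iic y) := fun a b hab =>
      measure_mono (Set.prod_mono_left (Set.Ioi_subset_Ioi hab))
    exact (hm1.measurable.pow_const _).mul hm2.measurable
  have hlin : ∫⁻ x, (ν (Set.Iic x ×ˢ Set.univ)) ^ (n - 1) * ν (Set.Ioi x ×ˢ Set.Iic y)
      ∂(margMeasAbove ν y) = L := by
    rw [margMeasAbove, lintegral_map hfmeas measurable_fst, hL]
    exact lintegral_congr fun p => by rw [hIicIio]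
  have hlin2 : ∫⁻ x, ENNReal.ofReal (margH ν x ^ (n - 1) * (margG ν y - bivF ν x y))
      ∂(margMeasAbove ν y) = L := by
    rw [← hlin]
    exact lintegral_congr fun x => hof x
  rw [hmain, hlin2, ENNReal.toReal_mul, ENNReal.toReal_natCast]
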